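/- With Q = diag(M_SS, M_ScSc), the spectral folding property M u = λ Q u ⇒ M J u = (2−λ) Q J u implies that all generalized eigenvalues λ of (M, Q) satisfy 0 ≤ λ ≤ 2. -/

import Mathlib

open Matrix

/-- The diagonal ±1 matrix: +1 on `S` (left summand), −1 on `Sᶜ` (right summand). -/
def Jmat (s t : ℕ) : Matrix (Fin s ⊕ Fin t) (Fin s ⊕ Fin t) ℝ :=
  Matrix.fromBlocks 1 0 0 (-1)

/-- The block-diagonal inner product matrix `Q = diag(M_SS, M_ScSc)`. -/
def Qmat {s t : ℕ} (M : Matrix (Fin s ⊕ Fin t) (Fin s ⊕ Fin t) ℝ) :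
    Matrix (Fin s ⊕ Fin t) (Fin s ⊕ Fin t) ℝ :=
  Matrix.fromBlocks M.toBlocks₁₁ 0 0 M.toBlocks₂₂

lemma Jmat_sq (s t : ℕ) : Jmat s t * Jmat s t = 1 := by
  simp [Jmat, Matrix.fromBlocks_multiply, ← Matrix.fromBlocks_one]

lemma key {s t : ℕ} (M : Matrix (Fin s ⊕ Fin t) (Fin s ⊕ Fin t) ℝ)
    (hM : M.PosSemidef) (hQ : (Qmat M).PosDef)
    (u : Fin s ⊕ Fin t → ℝ) (lam : ℝ) (hu : u ≠ 0)
    (h : M *ᵥ u = lam • (Qmat M *ᵥ u)) : 0 ≤ lam := by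
  have h1 : (0:ℝ) ≤ u ⬝ᵥ (M *ᵥ u) := by simpa using hM.dotProduct_mulVec_nonneg u
  have h2 : (0:ℝ) < u ⬝ᵥ (Qmat M *ᵥ u) := by simpa using hQ.dotProduct_mulVec_pos hu
  rw [h, dotProduct_smul, smul_eq_mul] at h1
  exact nonneg_of_mul_nonneg_left h1 h2

/-- With `Q = diag(M_SS, M_ScSc)` positive definite and the spectral folding property,
all generalized eigenvalues `λ` of `(M, Q)` satisfy `0 ≤ λ ≤ 2`. -/
theorem stmt_4 {s t : ℕ} (M : Matrix (Fin s ⊕ Fin t) (Fin s ⊕ Fin t) ℝ)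
    (hM : M.PosSemidef) (hQ : (Qmat M).PosDef)
    (hfold : ∀ (u : Fin s ⊕ Fin t → ℝ) (lam : ℝ),
      M *ᵥ u = lam • (Qmat M *ᵥ u) →
      M *ᵥ (Jmat s t *ᵥ u) = (2 - lam) • (Qmat M *ᵥ (Jmat s t *ᵥ u))) :
    ∀ (u : Fin s ⊕ Fin t → ℝ) (lam : ℝ), u ≠ 0 →
      M *ᵥ u = lam • (Qmat M *ᵥ u) → 0 ≤ lam ∧ lam ≤ 2 := by
  intro u lam hu h
  refine ⟨key M hM hQ u lam hu h, ?_⟩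
  have hJu : Jmat s t *ᵥ u ≠ 0 := by
    intro h0
    apply hu
    have := congrArg (fun v => Jmat s t *ᵥ v) h0
    simpa [Matrix.mulVec_mulVec, Jmat_sq] using this
  have := key M hM hQ (Jmat s t *ᵥ u) (2 - lam) hJu (hfold u lam h)
  linarith
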